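/- Let α ∈ (0,1) be irrational and k = ⌊1/α⌋. For any positive integer m: both m ∈ B_α and m + k ∈ B_α hold if and only if {1/α}·α < {(m+1)α} < α; and both m ∈ B_α and m + k + 1 ∈ B_α (with m + k ∉ B_α) hold if and only if {(m+1)α} < {1/α}·α. -/

import Mathlib

open scoped Classical

def beatty (α : ℝ) : Set ℤ := {m | ∃ n : ℕ, 0 < n ∧ m = ⌊(n : ℝ) / α⌋}

noncomputable def countLe (S : Set ℤ) (m : ℤ) : ℕ :=
  ((Finset.Icc 1 m).filter (fun k => k ∈ S)).card

lemma memB (α : ℝ) (hirr : Irrational α) (h0 : 0 < α) (j : ℤ) (hj : 1 ≤ j) :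
    j ∈ beatty α ↔ Int.fract (((j : ℝ) + 1) * α) < α := by
  have hirrj : ∀ i : ℤ, i ≠ 0 → Irrational ((i : ℝ) * α) := fun i hi => hirr.intCast_mul hi
  have hfr : Int.fract (((j : ℝ) + 1) * α) = ((j : ℝ) + 1) * α - ⌊((j : ℝ) + 1) * α⌋ := rfl
  have hexp : ((j : ℝ) + 1) * α = (j : ℝ) * α + α := by ring
  have key : j ∈ beatty α ↔ (j : ℝ) * α < (⌊((j : ℝ) + 1) * α⌋ : ℝ) := by
    constructor
    · rintro ⟨n, hn, hjn⟩
      have hjc : (j : ℝ) = (⌊(n : ℝ) / α⌋ : ℝ) := by rw [hjn]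
      have h1 : (j : ℝ) ≤ (n : ℝ) / α := by rw [hjc]; exact Int.floor_le _
      have h2 : (n : ℝ) / α < (j : ℝ) + 1 := by rw [hjc]; exact Int.lt_floor_add_one _
      have h1' : (j : ℝ) * α ≤ (n : ℝ) := by
        rw [le_div_iff₀ h0] at h1; linarith
      have h2' : (n : ℝ) < ((j : ℝ) + 1) * α := by
        rw [div_lt_iff₀ h0] at h2; linarith
      have hne : (j : ℝ) * α ≠ (n : ℝ) := by
        have := (hirrj j (by omega)).ne_int (n : ℤ)
        simpa using this
      have h3 : ((n : ℤ) : ℝ) ≤ (⌊((j : ℝ) + 1) * α⌋ : ℝ) := by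
        exact_mod_cast Int.le_floor.mpr (by push_cast; linarith)
      have : (j : ℝ) * α < (n : ℝ) := lt_of_le_of_ne h1' hne
      push_cast at h3
      linarith
    · intro h
      set F := ⌊((j : ℝ) + 1) * α⌋ with hF
      have hj0 : (0 : ℝ) < (j : ℝ) := by exact_mod_cast lt_of_lt_of_le zero_lt_one hj
      have hF0' : (0 : ℝ) < (F : ℝ) := lt_trans (mul_pos hj0 h0) h
      have hF0 : 0 < F := by exact_mod_cast hF0'
      refine ⟨F.toNat, by omega, ?_⟩
      have hFn : ((F.toNat : ℕ) : ℝ) = (F : ℝ) := by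
        have h' : (F.toNat : ℤ) = F := Int.toNat_of_nonneg hF0.le
        exact_mod_cast h'
      have hFle : (F : ℝ) ≤ ((j : ℝ) + 1) * α := Int.floor_le _
      have hFne : ((j : ℝ) + 1) * α ≠ (F : ℝ) := by
        have := (hirrj (j + 1) (by omega)).ne_int F
        push_cast at this ⊢
        convert this using 2
      have hFlt : (F : ℝ) < ((j : ℝ) + 1) * α := lt_of_le_of_ne hFle (Ne.symm hFne)
      symm
      rw [Int.floor_eq_iff]
      constructor
      · rw [hFn, le_div_iff₀ h0]; linarith
      · rw [hFn, div_lt_iff₀ h0]; push_cast; linarith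
  rw [key, hfr]
  constructor <;> intro h <;> linarith

theorem beatty_gap_criterion (α : ℝ) (hirr : Irrational α) (h0 : 0 < α) (h1 : α < 1)
    (k : ℕ) (hk : (k : ℤ) = ⌊1 / α⌋) (m : ℕ) (hm : 0 < m) :
    (((m : ℤ) ∈ beatty α ∧ ((m : ℤ) + k) ∈ beatty α) ↔
      (Int.fract (1 / α) * α < Int.fract (((m : ℝ) + 1) * α) ∧
        Int.fract (((m : ℝ) + 1) * α) < α)) ∧
    (((m : ℤ) ∈ beatty α ∧ ((m : ℤ) + k + 1) ∈ beatty α ∧ ((m : ℤ) + k) ∉ beatty α) ↔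
      Int.fract (((m : ℝ) + 1) * α) < Int.fract (1 / α) * α) := by
  have hirrj : ∀ i : ℤ, i ≠ 0 → Irrational ((i : ℝ) * α) := fun i hi => hirr.intCast_mul hi
  set x := Int.fract (((m : ℝ) + 1) * α) with hxdef
  set c := Int.fract (1 / α) * α with hcdef
  set F := ⌊((m : ℝ) + 1) * α⌋ with hFdef
  have hα' : α ≠ 0 := ne_of_gt h0
  -- facts about k
  have hkR1 : (k : ℝ) ≤ 1 / α := by
    have := Int.floor_le (1 / α); rw [← hk] at this; exact_mod_cast this
  have hkR2 : 1 / α < (k : ℝ) + 1 := by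
    have := Int.lt_floor_add_one (1 / α); rw [← hk] at this; exact_mod_cast this
  have hinv : Irrational (1 / α) := by
    rw [one_div]; exact hirr.inv
  have hkne : (k : ℝ) ≠ 1 / α := fun h => (hinv.ne_int k) h.symm
  have hka1 : (k : ℝ) * α < 1 := by
    have h' : (k : ℝ) < 1 / α := lt_of_le_of_ne hkR1 hkne
    rw [lt_div_iff₀ h0] at h'; linarith
  have hka2 : 1 < ((k : ℝ) + 1) * α := by
    rw [div_lt_iff₀ h0] at hkR2; linarith
  have hk1 : 1 ≤ k := by
    by_contra h
    have : k = 0 := by omega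
    rw [this] at hka2; push_cast at hka2; linarith
  have hkR : (1 : ℝ) ≤ (k : ℝ) := by exact_mod_cast hk1
  -- c = 1 - k α
  have hc : c = 1 - (k : ℝ) * α := by
    rw [hcdef, Int.fract, ← hk]
    push_cast
    field_simp
  have hc0 : 0 < c := by rw [hc]; linarith
  have hcα : c < α := by rw [hc]; linarith
  -- facts about x
  have hFx : ((m : ℝ) + 1) * α = (F : ℝ) + x := by
    rw [hxdef, hFdef, Int.fract]; ring
  have hirr_m1 : Irrational (((m : ℝ) + 1) * α) := by
    have := hirrj ((m : ℤ) + 1) (by omega)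
    push_cast at this; exact this
  have hx0 : 0 < x := Int.fract_pos.mpr (hirr_m1.ne_int F)
  have hx1 : x < 1 := Int.fract_lt_one _
  have hxα : x ≠ α := by
    intro h
    have e : ((m : ℝ) + 1) * α = (m : ℝ) * α + α := by ring
    have h' : (m : ℝ) * α = (F : ℝ) := by rw [e] at hFx; linarith
    exact (hirrj (m : ℤ) (by omega)).ne_int F (by push_cast; linarith)
  have hxc : x ≠ c := by
    intro h
    have hmk : ((m : ℝ) + (k : ℝ) + 1) * α = (F : ℝ) + 1 := by
      rw [hc] at h; nlinarith [hFx]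
    have := hirrj ((m : ℤ) + (k : ℤ) + 1) (by omega)
    push_cast at this
    exact this.ne_int (F + 1) (by push_cast; linarith [hmk])
  -- membership criteria
  have hB1 : ((m : ℤ) ∈ beatty α) ↔ x < α := by
    have := memB α hirr h0 (m : ℤ) (by exact_mod_cast hm)
    rw [hxdef]; convert this using 3 <;> push_cast <;> ring
  have hB2 : (((m : ℤ) + k) ∈ beatty α) ↔ Int.fract (((m : ℝ) + (k : ℝ) + 1) * α) < α := by
    have := memB α hirr h0 ((m : ℤ) + k) (by omega)
    convert this using 3 <;> push_cast <;> ring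
  have hB3 : (((m : ℤ) + k + 1) ∈ beatty α) ↔
      Int.fract (((m : ℝ) + (k : ℝ) + 2) * α) < α := by
    have := memB α hirr h0 ((m : ℤ) + k + 1) (by omega)
    convert this using 3 <;> push_cast <;> ring
  -- fract computations
  have hfr1 : Int.fract (((m : ℝ) + (k : ℝ) + 1) * α) = Int.fract (x + (k : ℝ) * α) := by
    have : ((m : ℝ) + (k : ℝ) + 1) * α = (x + (k : ℝ) * α) + (F : ℤ) := by
      push_cast; nlinarith [hFx]
    rw [this, Int.fract_add_intCast]
  have hfr2 : Int.fract (((m : ℝ) + (k : ℝ) + 2) * α) = Int.fract (x + α - c) := by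
    have : ((m : ℝ) + (k : ℝ) + 2) * α = (x + α - c) + ((F + 1 : ℤ) : ℝ) := by
      push_cast; rw [hc]; nlinarith [hFx]
    rw [this, Int.fract_add_intCast]
  rcases lt_or_gt_of_ne hxc with hlt | hgt
  · -- case x < c
    have hnotB2 : ¬ (((m : ℤ) + k) ∈ beatty α) := by
      rw [hB2, hfr1]
      have heq : Int.fract (x + (k : ℝ) * α) = x + (k : ℝ) * α := by
        rw [Int.fract_eq_self]
        constructor
        · positivity
        · rw [hc] at hlt; linarith
      rw [heq]
      push_neg
      nlinarith
    constructor
    · constructor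
      · rintro ⟨_, h2⟩; exact absurd h2 hnotB2
      · rintro ⟨h1, _⟩; exact absurd h1 (not_lt.mpr hlt.le)
    · constructor
      · intro _; exact hlt
      · intro _
        refine ⟨hB1.mpr (lt_trans hlt hcα), ?_, hnotB2⟩
        rw [hB3, hfr2]
        have heq : Int.fract (x + α - c) = x + α - c := by
          rw [Int.fract_eq_self]
          constructor <;> [linarith; linarith]
        rw [heq]; linarith
  · -- case c < x
    have hfr1' : Int.fract (((m : ℝ) + (k : ℝ) + 1) * α) = x - c := by
      rw [hfr1]
      have : x + (k : ℝ) * α = (x - c) + ((1 : ℤ) : ℝ) := by rw [hc]; push_cast; ring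
      rw [this, Int.fract_add_intCast, Int.fract_eq_self]
      constructor <;> linarith
    constructor
    · constructor
      · rintro ⟨h1, _⟩
        exact ⟨hgt, hB1.mp h1⟩
      · rintro ⟨_, h2⟩
        exact ⟨hB1.mpr h2, by rw [hB2, hfr1']; linarith⟩
    · constructor
      · rintro ⟨h1, _, h3⟩
        exfalso
        exact h3 (by rw [hB2, hfr1']; have := hB1.mp h1; linarith)
      · intro h
        exact absurd h (not_lt.mpr hgt.le)
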